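/- For w(x) = |x|^β with β ∈ (−1,1), the Helson–Szegő constant satisfies [w]²_{A₂(HS)} ≤ sec²(βπ/2), and sec²(βπ/2) ~ (1+β)^{−2} as β → −1⁺. -/

import Mathlib

open Real MeasureTheory

/-- The modified Hilbert transform `K` for `L^∞` functions, defined as a
principal-value limit. -/
noncomputable def Kop (f : ℝ → ℝ) (x : ℝ) : ℝ :=
  Filter.limUnder (nhdsWithin 0 (Set.Ioi 0))
    (fun ε : ℝ => (1 / π) * ∫ y in {y : ℝ | ε < |x - y|},
      f y * (1 / (x - y) + if 1 < |y| then 1 / y else 0))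

/-- The square of the Helson–Szegő constant of a weight `w`:
`[w]²_{A₂(HS)} = inf { e^{osc f₁} sec²‖f₂‖_∞ : w = e^{f₁+Kf₂}, f₁,f₂ ∈ L^∞, ‖f₂‖_∞ < π/2 }`. -/
noncomputable def HSconstSq (w : ℝ → ℝ) : ℝ :=
  sInf {c : ℝ | ∃ f₁ f₂ : ℝ → ℝ,
    (∀ᵐ x : ℝ, w x = Real.exp (f₁ x + Kop f₂ x)) ∧
    (∃ M : ℝ, ∀ x, |f₁ x| ≤ M) ∧
    (∃ b : ℝ, b < π / 2 ∧ ∀ x, |f₂ x| ≤ b) ∧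
    c = Real.exp (sSup (Set.range f₁) - sInf (Set.range f₁)) *
        (1 / Real.cos (sSup (Set.range fun x => |f₂ x|))) ^ 2}

open Set Filter Topology

noncomputable def Gk (x y : ℝ) : ℝ :=
  Real.sign y * (1 / (x - y) + if 1 < |y| then 1 / y else 0)

lemma measurable_realSign : Measurable Real.sign := by
  have : Real.sign = fun r : ℝ => if r < 0 then (-1:ℝ) else if 0 < r then 1 else 0 := by
    funext r; rfl
  rw [this]
  exact Measurable.ite (measurableSet_lt measurable_id measurable_const) measurable_const
    (Measurable.ite (measurableSet_lt measurable_const measurable_id) measurable_const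
      measurable_const)

lemma abs_realSign_le (y : ℝ) : |Real.sign y| ≤ 1 := by
  rcases lt_trichotomy y 0 with h | h | h
  · rw [Real.sign_of_neg h]; norm_num
  · rw [h, Real.sign_zero]; norm_num
  · rw [Real.sign_of_pos h]; norm_num

lemma measurable_Gk (x : ℝ) : Measurable (Gk x) := by
  apply measurable_realSign.mul
  apply Measurable.add
  · exact measurable_const.div (measurable_const.sub measurable_id)
  · exact Measurable.ite (measurableSet_lt measurable_const measurable_id.abs)
      (measurable_const.div measurable_id) measurable_const

lemma Gk_neg (x y : ℝ) : Gk (-x) (-y) = Gk x y := by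
  unfold Gk
  rw [Real.sign_neg, abs_neg]
  have h1 : -x - -y = -(x - y) := by ring
  rw [h1]
  by_cases h : 1 < |y|
  · simp only [if_pos h, one_div, inv_neg]
    ring
  · simp only [if_neg h, one_div, inv_neg]
    ring

lemma Gk_bound (x y ε : ℝ) (hε : 0 < ε) (h : ε ≤ |x - y|) : |Gk x y| ≤ 1 / ε + 1 := by
  unfold Gk
  rw [abs_mul]
  have h1 : |1 / (x - y) + if 1 < |y| then 1 / y else 0| ≤ 1 / ε + 1 := by
    refine (abs_add_le _ _).trans (add_le_add ?_ ?_)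
    · rw [abs_div, abs_one]
      exact div_le_div_of_nonneg_left (by norm_num) hε h
    · by_cases hy : 1 < |y|
      · rw [if_pos hy, abs_div, abs_one]
        calc 1 / |y| ≤ 1 / 1 := by
              apply div_le_div_of_nonneg_left (by norm_num) one_pos hy.le
          _ = 1 := by norm_num
      · rw [if_neg hy, abs_zero]; norm_num
  calc |Real.sign y| * |1 / (x - y) + if 1 < |y| then 1 / y else 0|
      ≤ 1 * (1 / ε + 1) := by
        apply mul_le_mul (abs_realSign_le y) h1 (abs_nonneg _) (by norm_num)
    _ = 1 / ε + 1 := one_mul _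

lemma tend_log_ratio (c : ℝ) :
    Tendsto (fun y : ℝ => Real.log (y + c) - Real.log y) atTop (𝓝 0) := by
  have h1 : Tendsto (fun y : ℝ => 1 + c * y⁻¹) atTop (𝓝 1) := by
    have h0 : Tendsto (fun y : ℝ => c * y⁻¹) atTop (𝓝 0) := by
      simpa using tendsto_inv_atTop_zero.const_mul c
    simpa using (tendsto_const_nhds (x := (1:ℝ)) (f := atTop)).add h0
  have h2 : Tendsto (fun y : ℝ => Real.log (1 + c * y⁻¹)) atTop (𝓝 0) := by
    have := (Real.continuousAt_log (by norm_num : (1:ℝ) ≠ 0)).tendsto.comp h1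
    rw [Real.log_one] at this
    exact this
  apply h2.congr'
  filter_upwards [eventually_gt_atTop (max 0 (-c))] with y hy
  have hy0 : 0 < y := lt_of_le_of_lt (le_max_left _ _) hy
  have hyc : 0 < y + c := by have := lt_of_le_of_lt (le_max_right _ _) hy; linarith
  have : 1 + c * y⁻¹ = (y + c) / y := by field_simp
  rw [this, Real.log_div hyc.ne' hy0.ne']

lemma key_Ioi (x a : ℝ) (hx : 0 < x) (hax : x < a) :
    IntegrableOn (fun y => x / (y * (y - x))) (Ioi a) volume ∧
    ∫ y in Ioi a, x / (y * (y - x)) = Real.log a - Real.log (a - x) := by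
  set g : ℝ → ℝ := fun y => Real.log (y - x) - Real.log y with hg
  have hderiv : ∀ y ∈ Ici a, HasDerivAt g (x / (y * (y - x))) y := by
    intro y hy
    have hy' : a ≤ y := hy
    have hy0 : 0 < y := lt_of_lt_of_le (hx.trans hax) hy'
    have hyx : 0 < y - x := by linarith
    have d1 : HasDerivAt (fun y : ℝ => Real.log (y - x)) (1 / (y - x)) y := by
      have := ((hasDerivAt_id y).sub_const x).log hyx.ne'
      simpa using this
    have d2 : HasDerivAt Real.log (1 / y) y := by
      simpa [one_div] using Real.hasDerivAt_log hy0.ne'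
    have := d1.sub d2
    refine this.congr_deriv ?_
    rw [div_sub_div _ _ hyx.ne' hy0.ne', div_eq_div_iff (by positivity) (by positivity)]
    ring
  have hnonneg : ∀ y ∈ Ioi a, 0 ≤ x / (y * (y - x)) := by
    intro y hy
    have hy0 : 0 < y := lt_of_lt_of_le (hx.trans hax) (le_of_lt hy)
    have hyx : 0 < y - x := by have : a < y := hy; linarith
    positivity
  have htend : Tendsto g atTop (𝓝 0) := by
    have := tend_log_ratio (-x)
    apply this.congr
    intro y; simp [hg, sub_eq_add_neg]
  have hcont : ContinuousWithinAt g (Ici a) a :=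
    (hderiv a self_mem_Ici).continuousAt.continuousWithinAt
  have hint : IntegrableOn (fun y => x / (y * (y - x))) (Ioi a) volume :=
    integrableOn_Ioi_deriv_of_nonneg hcont (fun y hy => hderiv y (mem_Ici.mpr (le_of_lt hy))) hnonneg htend
  refine ⟨hint, ?_⟩
  have := integral_Ioi_of_hasDerivAt_of_tendsto hcont (fun y hy => hderiv y (mem_Ici.mpr (le_of_lt hy)))
    hint htend
  rw [this]
  simp only [hg]
  ring

lemma key_Ioi' (x a : ℝ) (hx : 0 < x) (ha : 0 < a) :
    IntegrableOn (fun y => x / (y * (y + x))) (Ioi a) volume ∧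
    ∫ y in Ioi a, x / (y * (y + x)) = Real.log (a + x) - Real.log a := by
  set g : ℝ → ℝ := fun y => Real.log y - Real.log (y + x) with hg
  have hderiv : ∀ y ∈ Ici a, HasDerivAt g (x / (y * (y + x))) y := by
    intro y hy
    have hy' : a ≤ y := hy
    have hy0 : 0 < y := lt_of_lt_of_le ha hy'
    have hyx : 0 < y + x := by linarith
    have d1 : HasDerivAt Real.log (1 / y) y := by
      simpa [one_div] using Real.hasDerivAt_log hy0.ne'
    have d2 : HasDerivAt (fun y : ℝ => Real.log (y + x)) (1 / (y + x)) y := by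
      have := ((hasDerivAt_id y).add_const x).log hyx.ne'
      simpa using this
    have := d1.sub d2
    refine this.congr_deriv ?_
    rw [div_sub_div _ _ hy0.ne' hyx.ne', div_eq_div_iff (by positivity) (by positivity)]
    ring
  have hnonneg : ∀ y ∈ Ioi a, 0 ≤ x / (y * (y + x)) := by
    intro y hy
    have hy0 : 0 < y := lt_of_lt_of_le ha (le_of_lt hy)
    positivity
  have htend : Tendsto g atTop (𝓝 0) := by
    have := (tend_log_ratio x).neg
    rw [neg_zero] at this
    apply this.congr
    intro y; simp [hg]
  have hcont : ContinuousWithinAt g (Ici a) a :=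
    (hderiv a self_mem_Ici).continuousAt.continuousWithinAt
  have hint : IntegrableOn (fun y => x / (y * (y + x))) (Ioi a) volume :=
    integrableOn_Ioi_deriv_of_nonneg hcont (fun y hy => hderiv y (mem_Ici.mpr (le_of_lt hy))) hnonneg htend
  refine ⟨hint, ?_⟩
  have := integral_Ioi_of_hasDerivAt_of_tendsto hcont (fun y hy => hderiv y (mem_Ici.mpr (le_of_lt hy)))
    hint htend
  rw [this]
  simp only [hg]
  ring

lemma ftc_Ioo (a b : ℝ) (hab : a ≤ b) (F f : ℝ → ℝ)
    (hd : ∀ y ∈ Icc a b, HasDerivAt F (f y) y) (hc : ContinuousOn f (Icc a b)) :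
    ∫ y in Ioo a b, f y = F b - F a := by
  rw [← integral_Ioc_eq_integral_Ioo, ← intervalIntegral.integral_of_le hab]
  exact intervalIntegral.integral_eq_sub_of_hasDerivAt
    (by rwa [uIcc_of_le hab]) ((by rwa [uIcc_of_le hab] : ContinuousOn f (uIcc a b)).intervalIntegrable)

lemma Gk_integrableOn_Ioo (x ε a b : ℝ) (hε : 0 < ε)
    (h : ∀ y ∈ Ioo a b, ε ≤ |x - y|) : IntegrableOn (Gk x) (Ioo a b) volume := by
  refine Measure.integrableOn_of_bounded (M := 1 / ε + 1)
    (by simp [measure_Ioo_lt_top.ne]) ((measurable_Gk x).aestronglyMeasurable) ?_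
  filter_upwards [ae_restrict_mem measurableSet_Ioo] with y hy
  simpa [Real.norm_eq_abs] using Gk_bound x y ε hε (h y hy)

lemma Gk_int_Iio (x : ℝ) (hx : 0 < x) :
    IntegrableOn (Gk x) (Iio (-1)) volume ∧
    ∫ y in Iio (-1), Gk x y = Real.log (x + 1) := by
  have key := key_Ioi' x 1 hx one_pos
  have heq : EqOn (Gk x) (fun y => x / (-y * (-y + x))) (Iio (-1)) := by
    intro y hy
    have hy1 : y < -1 := hy
    have h1 : 1 < |y| := by rw [abs_of_neg (by linarith)]; linarith
    have hy0 : y ≠ 0 := by linarith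
    have hxy : x - y ≠ 0 := by intro h; nlinarith
    have hD : -y * (-y + x) ≠ 0 := by
      apply mul_ne_zero (by linarith)
      intro h; apply hxy; linarith
    unfold Gk
    rw [Real.sign_of_neg (by linarith), if_pos h1, eq_div_iff hD]
    field_simp
    ring
  have hint : IntegrableOn (fun y => x / (-y * (-y + x))) (Iio (-1)) volume := by
    rw [← Measure.map_neg_eq_self (volume : Measure ℝ)]
    have m : MeasurableEmbedding fun z : ℝ => -z :=
      (Homeomorph.neg ℝ).measurableEmbedding
    rw [m.integrableOn_map_iff]
    simp only [Function.comp_def, neg_neg, neg_preimage, neg_Iio]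
    simpa using key.1
  constructor
  · exact hint.congr_fun (fun y hy => (heq hy).symm) measurableSet_Iio
  · rw [setIntegral_congr_fun measurableSet_Iio heq]
    have h2 : ∫ y in Iio (-1:ℝ), x / (-y * (-y + x)) =
        ∫ y in Iic (-1:ℝ), x / (-y * (-y + x)) := by
      rw [integral_Iic_eq_integral_Iio]
    rw [h2]
    have h3 := integral_comp_neg_Iic (-1 : ℝ) (fun z => x / (z * (z + x)))
    rw [h3, neg_neg]
    rw [key.2]
    simp [add_comm]

lemma Gk_int_Ioi (x a : ℝ) (hx : 0 < x) (hax : x < a) (ha1 : 1 ≤ a) :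
    IntegrableOn (Gk x) (Ioi a) volume ∧
    ∫ y in Ioi a, Gk x y = Real.log (a - x) - Real.log a := by
  have key := key_Ioi x a hx hax
  have heq : EqOn (Gk x) (fun y => -(x / (y * (y - x)))) (Ioi a) := by
    intro y hy
    have hy1 : a < y := hy
    have hy0 : (0:ℝ) < y := by linarith
    have h1 : 1 < |y| := by rw [abs_of_pos hy0]; linarith
    have hxy : x - y ≠ 0 := by intro h; nlinarith
    unfold Gk
    rw [Real.sign_of_pos hy0, if_pos h1, one_mul]
    have hrw : -(x / (y * (y - x))) = x / ((x - y) * y) := by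
      rw [show y * (y - x) = -((x - y) * y) by ring, div_neg, neg_neg]
    show 1 / (x - y) + 1 / y = -(x / (y * (y - x)))
    rw [hrw, div_add_div _ _ hxy hy0.ne',
      div_eq_div_iff (mul_ne_zero hxy hy0.ne') (mul_ne_zero hxy hy0.ne')]
    ring
  constructor
  · have hIn : IntegrableOn (fun y => -(x / (y * (y - x)))) (Ioi a) volume := key.1.neg
    exact hIn.congr_fun (fun y hy => (heq hy).symm) measurableSet_Ioi
  · rw [setIntegral_congr_fun measurableSet_Ioi heq, integral_neg, key.2]
    ring

lemma hasDerivAt_log_const_sub (x y : ℝ) (hne : x - y ≠ 0) :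
    HasDerivAt (fun y : ℝ => Real.log (x - y)) (-((x - y)⁻¹)) y := by
  have := ((hasDerivAt_id y).const_sub x).log hne
  refine this.congr_deriv ?_
  simp [div_eq_mul_inv]

lemma hasDerivAt_neg_log_const_sub (x y : ℝ) (hne : x - y ≠ 0) :
    HasDerivAt (fun y : ℝ => -Real.log (x - y)) ((x - y)⁻¹) y := by
  have := (hasDerivAt_log_const_sub x y hne).neg
  exact this.congr_deriv (neg_neg _)

lemma hasDerivAt_neg_log_sub (x y : ℝ) (hne : y - x ≠ 0) :
    HasDerivAt (fun y : ℝ => -Real.log (y - x)) ((x - y)⁻¹) y := by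
  have := (((hasDerivAt_id y).sub_const x).log hne).neg
  refine this.congr_deriv ?_
  rw [show x - y = -(y - x) by ring, inv_neg, div_eq_mul_inv, one_mul]
  simp

lemma hasDerivAt_logpair (x y : ℝ) (hy : y ≠ 0) (hne : x - y ≠ 0) :
    HasDerivAt (fun y : ℝ => Real.log y - Real.log (x - y)) (x / (y * (x - y))) y := by
  have d1 : HasDerivAt Real.log (1 / y) y := by
    simpa [one_div] using Real.hasDerivAt_log hy
  have d2 := hasDerivAt_log_const_sub x y hne
  have := d1.sub d2
  refine this.congr_deriv ?_
  rw [sub_neg_eq_add, one_div, ← one_div ((x - y)), ← one_div y,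
    div_add_div _ _ hy hne, div_eq_div_iff (mul_ne_zero hy hne) (mul_ne_zero hy hne)]
  ring

lemma J_eval_lt (x ε : ℝ) (hx : 0 < x) (hx1 : x < 1) (hε : 0 < ε) (hεx : ε < x)
    (hε1 : x + ε < 1) :
    ∫ y in {y : ℝ | ε < |x - y|}, Gk x y = 2 * Real.log x := by
  have hset : {y : ℝ | ε < |x - y|} = Iio (x - ε) ∪ Ioi (x + ε) := by
    ext y
    simp only [mem_setOf_eq, mem_union, mem_Iio, mem_Ioi, lt_abs]
    constructor <;> rintro (h | h) <;> first | (left; linarith) | (right; linarith)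
  obtain ⟨hAint, hAval⟩ := Gk_int_Iio x hx
  obtain ⟨hEint, hEval⟩ := Gk_int_Ioi x 1 hx hx1 le_rfl
  -- piece B : Ico (-1) 0
  have hBeq : EqOn (Gk x) (fun y => -((x - y)⁻¹)) (Ioo (-1) 0) := by
    intro y hy
    obtain ⟨h1, h2⟩ := hy
    have habs : ¬ 1 < |y| := by rw [abs_of_neg h2]; push_neg; linarith
    unfold Gk
    rw [Real.sign_of_neg h2, if_neg habs, add_zero, one_div]
    ring
  have hBint : IntegrableOn (Gk x) (Ico (-1) 0) volume := by
    refine (Gk_integrableOn_Ioo x ε (-1) 0 hε ?_).congr_set_ae Ioo_ae_eq_Ico.symm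
    intro y hy
    rw [abs_of_pos (by linarith [hy.2] : (0:ℝ) < x - y)]
    linarith [hy.2]
  have hBval : ∫ y in Ico (-1:ℝ) 0, Gk x y = Real.log x - Real.log (x + 1) := by
    rw [integral_Ico_eq_integral_Ioo, setIntegral_congr_fun measurableSet_Ioo hBeq]
    have key := ftc_Ioo (-1) 0 (by norm_num) (fun y => Real.log (x - y))
      (fun y => -((x - y)⁻¹))
      (fun y hy => hasDerivAt_log_const_sub x y (by rcases hy with ⟨h1, h2⟩; intro h; nlinarith))
      (((continuous_const.sub continuous_id).continuousOn.inv₀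
        (fun y hy => by
          rcases hy with ⟨h1, h2⟩; intro h; simp only [Pi.sub_apply, id_eq] at h; nlinarith)).neg)
    rw [key]
    show Real.log (x - 0) - Real.log (x - -1) = _
    rw [sub_zero, show x - -1 = x + 1 from by ring]
  -- piece C : Ico 0 (x - ε)
  have hCeq : EqOn (Gk x) (fun y => (x - y)⁻¹) (Ioo 0 (x - ε)) := by
    intro y hy
    obtain ⟨h1, h2⟩ := hy
    have habs : ¬ 1 < |y| := by rw [abs_of_pos h1]; push_neg; linarith
    unfold Gk
    rw [Real.sign_of_pos h1, if_neg habs, add_zero, one_div, one_mul]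
  have hCint : IntegrableOn (Gk x) (Ico 0 (x - ε)) volume := by
    refine (Gk_integrableOn_Ioo x ε 0 (x - ε) hε ?_).congr_set_ae Ioo_ae_eq_Ico.symm
    intro y hy
    rw [abs_of_pos (by linarith [hy.2] : (0:ℝ) < x - y)]
    linarith [hy.2]
  have hCval : ∫ y in Ico (0:ℝ) (x - ε), Gk x y = Real.log x - Real.log ε := by
    rw [integral_Ico_eq_integral_Ioo, setIntegral_congr_fun measurableSet_Ioo hCeq]
    have key := ftc_Ioo 0 (x - ε) (by linarith) (fun y => -Real.log (x - y))
      (fun y => (x - y)⁻¹)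
      (fun y hy => hasDerivAt_neg_log_const_sub x y
        (by rcases hy with ⟨h1, h2⟩; intro h; nlinarith))
      ((continuous_const.sub continuous_id).continuousOn.inv₀
        (fun y hy => by
          rcases hy with ⟨h1, h2⟩; intro h; simp only [Pi.sub_apply, id_eq] at h; nlinarith))
    rw [key]
    show -Real.log (x - (x - ε)) - -Real.log (x - 0) = _
    rw [show x - (x - ε) = ε from by ring, sub_zero]
    ring
  -- piece D : Ioc (x + ε) 1
  have hDeq : EqOn (Gk x) (fun y => (x - y)⁻¹) (Ioo (x + ε) 1) := by
    intro y hy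
    obtain ⟨h1, h2⟩ := hy
    have hy0 : 0 < y := by linarith
    have habs : ¬ 1 < |y| := by rw [abs_of_pos hy0]; push_neg; linarith
    unfold Gk
    rw [Real.sign_of_pos hy0, if_neg habs, add_zero, one_div, one_mul]
  have hDint : IntegrableOn (Gk x) (Ioc (x + ε) 1) volume := by
    refine (Gk_integrableOn_Ioo x ε (x + ε) 1 hε ?_).congr_set_ae Ioo_ae_eq_Ioc.symm
    intro y hy
    rw [abs_sub_comm, abs_of_pos (by linarith [hy.1] : (0:ℝ) < y - x)]
    linarith [hy.1]
  have hDval : ∫ y in Ioc (x + ε) 1, Gk x y = Real.log ε - Real.log (1 - x) := by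
    rw [integral_Ioc_eq_integral_Ioo, setIntegral_congr_fun measurableSet_Ioo hDeq]
    have key := ftc_Ioo (x + ε) 1 (by linarith) (fun y => -Real.log (y - x))
      (fun y => (x - y)⁻¹)
      (fun y hy => hasDerivAt_neg_log_sub x y
        (by rcases hy with ⟨h1, h2⟩; intro h; nlinarith))
      ((continuous_const.sub continuous_id).continuousOn.inv₀
        (fun y hy => by
          rcases hy with ⟨h1, h2⟩; intro h; simp only [Pi.sub_apply, id_eq] at h; nlinarith))
    rw [key]
    show -Real.log (1 - x) - -Real.log (x + ε - x) = _
    rw [show x + ε - x = ε from by ring]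
    ring
  -- assemble
  have hdisj1 : Disjoint (Iio (-1:ℝ)) (Ico (-1) (x - ε)) := by
    rw [Set.disjoint_left]
    rintro y (hy : y < -1) ⟨h1, h2⟩
    linarith
  have hdisj2 : Disjoint (Ico (-1:ℝ) 0) (Ico 0 (x - ε)) := by
    rw [Set.disjoint_left]
    rintro y ⟨h1, h2⟩ ⟨h3, h4⟩
    linarith
  have hdisj3 : Disjoint (Iio (x - ε)) (Ioi (x + ε)) := by
    rw [Set.disjoint_left]
    rintro y (hy : y < x - ε) (hy2 : x + ε < y)
    linarith
  have hdisj4 : Disjoint (Ioc (x + ε) 1) (Ioi (1:ℝ)) := by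
    rw [Set.disjoint_left]
    rintro y ⟨h1, h2⟩ (h3 : (1:ℝ) < y)
    linarith
  have hBCint : IntegrableOn (Gk x) (Ico (-1) (x - ε)) volume := by
    rw [← Ico_union_Ico_eq_Ico (by norm_num : (-1:ℝ) ≤ 0) (by linarith : (0:ℝ) ≤ x - ε)]
    exact hBint.union hCint
  have hIioint : IntegrableOn (Gk x) (Iio (x - ε)) volume := by
    rw [← Iio_union_Ico_eq_Iio (by linarith : (-1:ℝ) ≤ x - ε)]
    exact hAint.union hBCint
  have hIoiint : IntegrableOn (Gk x) (Ioi (x + ε)) volume := by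
    rw [← Ioc_union_Ioi_eq_Ioi (by linarith : x + ε ≤ 1)]
    exact hDint.union hEint
  rw [hset, setIntegral_union hdisj3 measurableSet_Ioi hIioint hIoiint]
  have e1 : ∫ y in Iio (x - ε), Gk x y
      = (∫ y in Iio (-1:ℝ), Gk x y) + ((∫ y in Ico (-1:ℝ) 0, Gk x y)
        + ∫ y in Ico (0:ℝ) (x - ε), Gk x y) := by
    rw [← setIntegral_union hdisj2 measurableSet_Ico hBint hCint,
      Ico_union_Ico_eq_Ico (by norm_num : (-1:ℝ) ≤ 0) (by linarith : (0:ℝ) ≤ x - ε),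
      ← setIntegral_union hdisj1 measurableSet_Ico hAint hBCint,
      Iio_union_Ico_eq_Iio (by linarith : (-1:ℝ) ≤ x - ε)]
  have e2 : ∫ y in Ioi (x + ε), Gk x y
      = (∫ y in Ioc (x + ε) 1, Gk x y) + ∫ y in Ioi (1:ℝ), Gk x y := by
    rw [← setIntegral_union hdisj4 measurableSet_Ioi hDint hEint,
      Ioc_union_Ioi_eq_Ioi (by linarith : x + ε ≤ 1)]
  rw [e1, e2, hAval, hBval, hCval, hDval, hEval]
  have h1x : (1:ℝ) - x ≠ 0 := by intro h; nlinarith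
  rw [Real.log_one]
  ring

lemma J_eval_gt (x ε : ℝ) (hx1 : 1 < x) (hε : 0 < ε) (hε1 : ε < x - 1) :
    ∫ y in {y : ℝ | ε < |x - y|}, Gk x y
      = 2 * Real.log x + (Real.log (x - ε) - Real.log (x + ε)) := by
  have hx : (0:ℝ) < x := by linarith
  have hset : {y : ℝ | ε < |x - y|} = Iio (x - ε) ∪ Ioi (x + ε) := by
    ext y
    simp only [mem_setOf_eq, mem_union, mem_Iio, mem_Ioi, lt_abs]
    constructor <;> rintro (h | h) <;> first | (left; linarith) | (right; linarith)
  obtain ⟨hAint, hAval⟩ := Gk_int_Iio x hx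
  obtain ⟨hEint, hEval⟩ := Gk_int_Ioi x (x + ε) hx (by linarith) (by linarith)
  -- piece B : Ico (-1) 0
  have hBeq : EqOn (Gk x) (fun y => -((x - y)⁻¹)) (Ioo (-1) 0) := by
    intro y hy
    obtain ⟨h1, h2⟩ := hy
    have habs : ¬ 1 < |y| := by rw [abs_of_neg h2]; push_neg; linarith
    unfold Gk
    rw [Real.sign_of_neg h2, if_neg habs, add_zero, one_div]
    ring
  have hBint : IntegrableOn (Gk x) (Ico (-1) 0) volume := by
    refine (Gk_integrableOn_Ioo x ε (-1) 0 hε ?_).congr_set_ae Ioo_ae_eq_Ico.symm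
    intro y hy
    rw [abs_of_pos (by linarith [hy.2] : (0:ℝ) < x - y)]
    linarith [hy.2]
  have hBval : ∫ y in Ico (-1:ℝ) 0, Gk x y = Real.log x - Real.log (x + 1) := by
    rw [integral_Ico_eq_integral_Ioo, setIntegral_congr_fun measurableSet_Ioo hBeq]
    have key := ftc_Ioo (-1) 0 (by norm_num) (fun y => Real.log (x - y))
      (fun y => -((x - y)⁻¹))
      (fun y hy => hasDerivAt_log_const_sub x y (by rcases hy with ⟨h1, h2⟩; intro h; nlinarith))
      (((continuous_const.sub continuous_id).continuousOn.inv₀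
        (fun y hy => by
          rcases hy with ⟨h1, h2⟩; intro h; simp only [Pi.sub_apply, id_eq] at h; nlinarith)).neg)
    rw [key]
    show Real.log (x - 0) - Real.log (x - -1) = _
    rw [sub_zero, show x - -1 = x + 1 from by ring]
  -- piece C : Ico 0 1
  have hCeq : EqOn (Gk x) (fun y => (x - y)⁻¹) (Ioo 0 1) := by
    intro y hy
    obtain ⟨h1, h2⟩ := hy
    have habs : ¬ 1 < |y| := by rw [abs_of_pos h1]; push_neg; linarith
    unfold Gk
    rw [Real.sign_of_pos h1, if_neg habs, add_zero, one_div, one_mul]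
  have hCint : IntegrableOn (Gk x) (Ico 0 1) volume := by
    refine (Gk_integrableOn_Ioo x ε 0 1 hε ?_).congr_set_ae Ioo_ae_eq_Ico.symm
    intro y hy
    rw [abs_of_pos (by linarith [hy.2] : (0:ℝ) < x - y)]
    linarith [hy.2]
  have hCval : ∫ y in Ico (0:ℝ) 1, Gk x y = Real.log x - Real.log (x - 1) := by
    rw [integral_Ico_eq_integral_Ioo, setIntegral_congr_fun measurableSet_Ioo hCeq]
    have key := ftc_Ioo 0 1 (by norm_num) (fun y => -Real.log (x - y))
      (fun y => (x - y)⁻¹)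
      (fun y hy => hasDerivAt_neg_log_const_sub x y
        (by rcases hy with ⟨h1, h2⟩; intro h; nlinarith))
      ((continuous_const.sub continuous_id).continuousOn.inv₀
        (fun y hy => by
          rcases hy with ⟨h1, h2⟩; intro h; simp only [Pi.sub_apply, id_eq] at h; nlinarith))
    rw [key]
    show -Real.log (x - 1) - -Real.log (x - 0) = _
    rw [sub_zero]
    ring
  -- piece D : Ico 1 (x - ε)
  have hDeq : EqOn (Gk x) (fun y => x / (y * (x - y))) (Ioo 1 (x - ε)) := by
    intro y hy
    obtain ⟨h1, h2⟩ := hy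
    have hy0 : (0:ℝ) < y := by linarith
    have habs : 1 < |y| := by rw [abs_of_pos hy0]; linarith
    have hxy : x - y ≠ 0 := by intro h; nlinarith
    unfold Gk
    rw [Real.sign_of_pos hy0, if_pos habs, one_mul, div_add_div _ _ hxy hy0.ne',
      div_eq_div_iff (mul_ne_zero hxy hy0.ne') (mul_ne_zero hy0.ne' hxy)]
    ring
  have hDint : IntegrableOn (Gk x) (Ico 1 (x - ε)) volume := by
    refine (Gk_integrableOn_Ioo x ε 1 (x - ε) hε ?_).congr_set_ae Ioo_ae_eq_Ico.symm
    intro y hy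
    rw [abs_of_pos (by linarith [hy.2] : (0:ℝ) < x - y)]
    linarith [hy.2]
  have hDval : ∫ y in Ico (1:ℝ) (x - ε), Gk x y
      = Real.log (x - ε) - Real.log ε + Real.log (x - 1) := by
    rw [integral_Ico_eq_integral_Ioo, setIntegral_congr_fun measurableSet_Ioo hDeq]
    have key := ftc_Ioo 1 (x - ε) (by linarith) (fun y => Real.log y - Real.log (x - y))
      (fun y => x / (y * (x - y)))
      (fun y hy => hasDerivAt_logpair x y (by rcases hy with ⟨h1, h2⟩; intro h; nlinarith)
        (by rcases hy with ⟨h1, h2⟩; intro h; nlinarith))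
      (continuousOn_const.div
        (continuousOn_id.mul (continuous_const.sub continuous_id).continuousOn)
        (fun y hy => by
          rcases hy with ⟨h1, h2⟩
          intro h
          rcases mul_eq_zero.mp h with h' | h' <;>
            first
              | nlinarith
              | (simp only [id_eq] at h'; nlinarith)))
    rw [key]
    show Real.log (x - ε) - Real.log (x - (x - ε)) - (Real.log 1 - Real.log (x - 1)) = _
    rw [show x - (x - ε) = ε from by ring, Real.log_one]
    ring
  -- assemble
  have hdisj1 : Disjoint (Iio (-1:ℝ)) (Ico (-1) (x - ε)) := by
    rw [Set.disjoint_left]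
    rintro y (hy : y < -1) ⟨h1, h2⟩
    linarith
  have hdisj2 : Disjoint (Ico (-1:ℝ) 0) (Ico 0 (x - ε)) := by
    rw [Set.disjoint_left]
    rintro y ⟨h1, h2⟩ ⟨h3, h4⟩
    linarith
  have hdisj2' : Disjoint (Ico (0:ℝ) 1) (Ico 1 (x - ε)) := by
    rw [Set.disjoint_left]
    rintro y ⟨h1, h2⟩ ⟨h3, h4⟩
    linarith
  have hdisj3 : Disjoint (Iio (x - ε)) (Ioi (x + ε)) := by
    rw [Set.disjoint_left]
    rintro y (hy : y < x - ε) (hy2 : x + ε < y)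
    linarith
  have hCDint : IntegrableOn (Gk x) (Ico 0 (x - ε)) volume := by
    rw [← Ico_union_Ico_eq_Ico (by norm_num : (0:ℝ) ≤ 1) (by linarith : (1:ℝ) ≤ x - ε)]
    exact hCint.union hDint
  have hBCDint : IntegrableOn (Gk x) (Ico (-1) (x - ε)) volume := by
    rw [← Ico_union_Ico_eq_Ico (by norm_num : (-1:ℝ) ≤ 0) (by linarith : (0:ℝ) ≤ x - ε)]
    exact hBint.union hCDint
  have hIioint : IntegrableOn (Gk x) (Iio (x - ε)) volume := by
    rw [← Iio_union_Ico_eq_Iio (by linarith : (-1:ℝ) ≤ x - ε)]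
    exact hAint.union hBCDint
  rw [hset, setIntegral_union hdisj3 measurableSet_Ioi hIioint hEint]
  have e0 : ∫ y in Ico (0:ℝ) (x - ε), Gk x y
      = (∫ y in Ico (0:ℝ) 1, Gk x y) + ∫ y in Ico (1:ℝ) (x - ε), Gk x y := by
    rw [← setIntegral_union hdisj2' measurableSet_Ico hCint hDint,
      Ico_union_Ico_eq_Ico (by norm_num : (0:ℝ) ≤ 1) (by linarith : (1:ℝ) ≤ x - ε)]
  have e1 : ∫ y in Iio (x - ε), Gk x y
      = (∫ y in Iio (-1:ℝ), Gk x y) + ((∫ y in Ico (-1:ℝ) 0, Gk x y)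
        + ∫ y in Ico (0:ℝ) (x - ε), Gk x y) := by
    rw [← setIntegral_union hdisj2 measurableSet_Ico hBint hCDint,
      Ico_union_Ico_eq_Ico (by norm_num : (-1:ℝ) ≤ 0) (by linarith : (0:ℝ) ≤ x - ε),
      ← setIntegral_union hdisj1 measurableSet_Ico hAint hBCDint,
      Iio_union_Ico_eq_Iio (by linarith : (-1:ℝ) ≤ x - ε)]
  rw [e1, e0, hAval, hBval, hCval, hDval, hEval,
    show x + ε - x = ε from by ring]
  ring

lemma J_tendsto (x : ℝ) (hx : 0 < x) (hx1 : x ≠ 1) :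
    Tendsto (fun ε => ∫ y in {y : ℝ | ε < |x - y|}, Gk x y)
      (nhdsWithin 0 (Ioi 0)) (𝓝 (2 * Real.log x)) := by
  rcases lt_or_gt_of_ne hx1 with hlt | hgt
  · -- x < 1 : eventually constant
    have hmem : Ioo (0:ℝ) (min x (1 - x)) ∈ nhdsWithin (0:ℝ) (Ioi 0) :=
      Ioo_mem_nhdsGT_of_mem (left_mem_Ico.mpr (lt_min hx (by linarith)))
    refine Tendsto.congr' ?_ tendsto_const_nhds
    filter_upwards [hmem] with ε hε
    exact (J_eval_lt x ε hx hlt hε.1 (lt_of_lt_of_le hε.2 (min_le_left _ _))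
      (by have := lt_of_lt_of_le hε.2 (min_le_right _ _); linarith)).symm
  · -- x > 1
    have hmem : Ioo (0:ℝ) (x - 1) ∈ nhdsWithin (0:ℝ) (Ioi 0) :=
      Ioo_mem_nhdsGT_of_mem (left_mem_Ico.mpr (by linarith))
    have hcont : Tendsto (fun ε : ℝ => 2 * Real.log x + (Real.log (x - ε) - Real.log (x + ε)))
        (𝓝 0) (𝓝 (2 * Real.log x)) := by
      have hx0 : x ≠ 0 := by linarith
      have c1 : ContinuousAt (fun ε : ℝ => Real.log (x - ε)) 0 := by
        apply ContinuousAt.comp (x := (0:ℝ)) (g := Real.log)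
        · simp only [sub_zero]
          exact Real.continuousAt_log hx0
        · exact (continuous_const.sub continuous_id).continuousAt
      have c2 : ContinuousAt (fun ε : ℝ => Real.log (x + ε)) 0 := by
        apply ContinuousAt.comp (x := (0:ℝ)) (g := Real.log)
        · simp only [add_zero]
          exact Real.continuousAt_log hx0
        · exact (continuous_const.add continuous_id).continuousAt
      have h3 : ContinuousAt
          (fun ε : ℝ => 2 * Real.log x + (Real.log (x - ε) - Real.log (x + ε))) 0 :=
        (continuousAt_const (y := 2 * Real.log x)).add (c1.sub c2)
      have := h3.tendsto
      simpa using this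
    refine Tendsto.congr' ?_ (hcont.mono_left nhdsWithin_le_nhds)
    filter_upwards [hmem] with ε hε
    exact (J_eval_gt x ε hgt hε.1 hε.2).symm

lemma J_symm (x ε : ℝ) :
    ∫ y in {y : ℝ | ε < |x - y|}, Gk x y
      = ∫ y in {y : ℝ | ε < |(-x) - y|}, Gk (-x) y := by
  have m : MeasurableEmbedding fun z : ℝ => -z := (Homeomorph.neg ℝ).measurableEmbedding
  have h := m.setIntegral_map (μ := volume) (g := Gk (-x)) (s := {y : ℝ | ε < |(-x) - y|})
  rw [Measure.map_neg_eq_self] at h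
  rw [h]
  have hpre : (fun z : ℝ => -z) ⁻¹' {y : ℝ | ε < |(-x) - y|} = {z : ℝ | ε < |x - z|} := by
    ext z
    simp only [mem_preimage, mem_setOf_eq]
    rw [show (-x) - (-z) = -(x - z) by ring, abs_neg]
  rw [hpre]
  refine setIntegral_congr_fun ?_ (fun z _ => (Gk_neg x z).symm)
  exact measurableSet_lt measurable_const ((measurable_const.sub measurable_id).abs)

lemma J_tendsto' (x : ℝ) (hx : x ≠ 0) (hx1 : |x| ≠ 1) :
    Tendsto (fun ε => ∫ y in {y : ℝ | ε < |x - y|}, Gk x y)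
      (nhdsWithin 0 (Ioi 0)) (𝓝 (2 * Real.log |x|)) := by
  rcases lt_trichotomy x 0 with hneg | h0 | hpos
  · rw [abs_of_neg hneg]
    have h1 : (-x) ≠ 1 := by
      intro h; apply hx1; rw [abs_of_neg hneg, h]
    have := J_tendsto (-x) (by linarith) h1
    exact Tendsto.congr (fun ε => (J_symm x ε).symm) this
  · exact absurd h0 hx
  · rw [abs_of_pos hpos]
    have h1 : x ≠ 1 := by
      intro h; apply hx1; rw [abs_of_pos hpos, h]
    exact J_tendsto x hpos h1


lemma Kop_eq (c x : ℝ) (hx : x ≠ 0) (hx1 : |x| ≠ 1) :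
    Kop (fun y => c * Real.sign y) x = 2 * c / π * Real.log |x| := by
  have hJ := J_tendsto' x hx hx1
  unfold Kop
  apply Filter.Tendsto.limUnder_eq
  have heq : ∀ ε : ℝ, (1 / π) * (c * ∫ y in {y : ℝ | ε < |x - y|}, Gk x y)
      = (1 / π) * ∫ y in {y : ℝ | ε < |x - y|},
        (c * Real.sign y) * (1 / (x - y) + if 1 < |y| then 1 / y else 0) := by
    intro ε
    congr 1
    rw [← integral_const_mul]
    congr 1
    funext y
    simp only [Gk]
    ring
  have h2 := (hJ.const_mul c).const_mul (1 / π)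
  rw [show (1 / π) * (c * (2 * Real.log |x|)) = 2 * c / π * Real.log |x| from by ring] at h2
  exact h2.congr heq


/-- for `w(x) = |x|^β` with `β ∈ (−1,1)`, `[w]²_{A₂(HS)} ≤ sec²(βπ/2)`, and
`sec²(βπ/2) ~ (1+β)^{−2}` as `β → −1⁺` (i.e. `sec²(βπ/2)·(1+β)² → 4/π²`). -/
theorem stmt19 :
    (∀ β : ℝ, -1 < β → β < 1 →
      HSconstSq (fun x => |x| ^ β) ≤ (1 / Real.cos (β * π / 2)) ^ 2) ∧
    Filter.Tendsto (fun β : ℝ => (1 / Real.cos (β * π / 2)) ^ 2 * (1 + β) ^ 2)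
      (nhdsWithin (-1 : ℝ) (Set.Ioi (-1))) (nhds (4 / π ^ 2)) := by
  constructor
  · intro β hβ1 hβ2
    set c : ℝ := β * π / 2 with hc
    have hβabs : |β| < 1 := abs_lt.mpr ⟨hβ1, hβ2⟩
    have hcabs : |c| = |β| * (π / 2) := by
      rw [hc, abs_div, abs_mul, abs_of_pos Real.pi_pos, abs_two]
      ring
    have hclt : |c| < π / 2 := by
      rw [hcabs]
      calc |β| * (π / 2) < 1 * (π / 2) :=
            mul_lt_mul_of_pos_right hβabs (by positivity)
        _ = π / 2 := one_mul _
    have hbound : ∀ y : ℝ, |c * Real.sign y| ≤ |c| := by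
      intro y
      rw [abs_mul]
      calc |c| * |Real.sign y| ≤ |c| * 1 :=
            mul_le_mul_of_nonneg_left (abs_realSign_le y) (abs_nonneg c)
        _ = |c| := mul_one _
    apply csInf_le
    · refine ⟨0, fun t ht => ?_⟩
      obtain ⟨f₁, f₂, -, -, -, hteq⟩ := ht
      rw [hteq]
      positivity
    · refine ⟨fun _ => 0, fun y => c * Real.sign y, ?_, ⟨0, fun x => by simp⟩,
        ⟨|c|, hclt, hbound⟩, ?_⟩
      · -- a.e. identity
        have h0 : ∀ a : ℝ, ∀ᵐ x : ℝ, x ≠ a := by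
          intro a
          have hm : (volume : Measure ℝ) {a} = 0 := measure_singleton a
          filter_upwards [measure_eq_zero_iff_ae_notMem.mp hm] with x hx
          simpa using hx
        filter_upwards [h0 0, h0 1, h0 (-1)] with x hx0 hx1 hxm1
        have habs : |x| ≠ 1 := by
          intro h
          rcases (abs_eq zero_le_one).mp h with h' | h'
          · exact hx1 h'
          · exact hxm1 h'
        rw [Kop_eq c x hx0 habs, zero_add]
        have hxpos : 0 < |x| := abs_pos.mpr hx0
        rw [Real.rpow_def_of_pos hxpos]
        congr 1
        rw [hc]
        have hπ : (π : ℝ) ≠ 0 := Real.pi_ne_zero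
        field_simp
      · -- value identity
        have hr0 : Set.range (fun _ : ℝ => (0 : ℝ)) = {0} := Set.range_const
        have hsup : sSup (Set.range fun y : ℝ => |c * Real.sign y|) = |c| := by
          apply le_antisymm
          · apply csSup_le (Set.range_nonempty _)
            rintro t ⟨y, rfl⟩
            exact hbound y
          · apply le_csSup
            · exact ⟨|c|, by rintro t ⟨y, rfl⟩; exact hbound y⟩
            · exact ⟨1, by show |c * Real.sign 1| = |c|; rw [Real.sign_one, mul_one]⟩
        rw [hr0, hsup, csSup_singleton, csInf_singleton, sub_zero, Real.exp_zero, one_mul,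
          Real.cos_abs, hc]
  · -- the asymptotic statement
    have hsin : Tendsto (fun z : ℝ => Real.sin z / z) (𝓝[≠] (0:ℝ)) (𝓝 1) := by
      have h := Real.hasDerivAt_sin 0
      rw [Real.cos_zero] at h
      have h2 := hasDerivAt_iff_tendsto_slope.mp h
      apply h2.congr
      intro z
      rw [slope_def_field]
      simp
    have h1 : Tendsto (fun β : ℝ => (1 + β) * (π / 2)) (𝓝[>] (-1:ℝ)) (𝓝[≠] (0:ℝ)) := by
      have hb : Tendsto (fun β : ℝ => (1 + β) * (π / 2)) (𝓝 (-1:ℝ)) (𝓝 0) := by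
        have hcont : Continuous (fun β : ℝ => (1 + β) * (π / 2)) := by continuity
        have := hcont.tendsto (-1:ℝ)
        simpa using this
      refine tendsto_nhdsWithin_of_tendsto_nhds_of_eventually_within _
        (hb.mono_left nhdsWithin_le_nhds) ?_
      filter_upwards [self_mem_nhdsWithin] with β hβ
      have hβ' : (-1:ℝ) < β := hβ
      have hpos : (0:ℝ) < (1 + β) * (π / 2) :=
        mul_pos (by linarith) (by positivity)
      exact mem_compl_singleton_iff.mpr (ne_of_gt hpos)
    have key : ∀ β : ℝ, (1 / Real.cos (β * π / 2)) ^ 2 * (1 + β) ^ 2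
        = 4 / π ^ 2 * ((Real.sin ((1 + β) * (π / 2)) / ((1 + β) * (π / 2)))⁻¹) ^ 2 := by
      intro β
      have hπ : (π : ℝ) ≠ 0 := Real.pi_ne_zero
      have hcos : Real.cos (β * π / 2) = Real.sin ((1 + β) * (π / 2)) := by
        rw [show β * π / 2 = -(π / 2 - (1 + β) * (π / 2)) by ring, Real.cos_neg,
          Real.cos_pi_div_two_sub]
      have hone : (4:ℝ) / π ^ 2 * (π / 2) ^ 2 = 1 := by
        field_simp
        ring
      rw [hcos, inv_div, div_pow, div_pow, one_pow,
        show ((1 + β) * (π / 2)) ^ 2 = (1 + β) ^ 2 * (π / 2) ^ 2 by ring,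
        show 4 / π ^ 2 * ((1 + β) ^ 2 * (π / 2) ^ 2 / Real.sin ((1 + β) * (π / 2)) ^ 2)
          = (4 / π ^ 2 * (π / 2) ^ 2) * ((1 + β) ^ 2 / Real.sin ((1 + β) * (π / 2)) ^ 2) by ring,
        hone, one_mul]
      ring
    have hfin := (((hsin.comp h1).inv₀ one_ne_zero).pow 2).const_mul (4 / π ^ 2)
    rw [show ((1:ℝ)⁻¹) ^ 2 = 1 by norm_num, mul_one] at hfin
    exact hfin.congr (fun β => (key β).symm)
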